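/- As formal power series in v over ℚ[q], (1+2qv)^{-1/2} · log(1+2qv)/(2q) = Σ_{m≥1} P(m,1) q^{m−1} v^m / m!, where P(m,1) = (−1)^{m−1} (2m−1)!! Σ_{j=0}^{m−1} 1/(2j+1). -/

import Mathlib

open PowerSeries Polynomial

private lemma coeff_X_mul'' {R : Type*} [CommRing R] (f : PowerSeries R) (n : ℕ) :
    PowerSeries.coeff n (PowerSeries.X * f) =
      if n = 0 then 0 else PowerSeries.coeff (n-1) f := by
  cases n with
  | zero => simp [PowerSeries.coeff_zero_eq_constantCoeff]
  | succ k => simp [PowerSeries.coeff_succ_X_mul]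

private lemma coeff_derivativeFun'' {R : Type*} [CommRing R] (f : PowerSeries R) (n : ℕ) :
    PowerSeries.coeff n (PowerSeries.derivativeFun f) = PowerSeries.coeff (n + 1) f * (n + 1) :=
  PowerSeries.coeff_derivative f n

private lemma coeff_A_mul (a : Polynomial ℚ) (f : PowerSeries (Polynomial ℚ)) (n : ℕ) :
    PowerSeries.coeff n
        ((1 + PowerSeries.C a * PowerSeries.X) * f) =
      PowerSeries.coeff n f +
        a * (if n = 0 then 0 else PowerSeries.coeff (n-1) f) := by
  rw [add_mul, one_mul, mul_assoc, map_add, PowerSeries.coeff_C_mul, coeff_X_mul'']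

private lemma pred_deriv (f : PowerSeries (Polynomial ℚ)) (n : ℕ) :
    (if n = 0 then 0 else
        PowerSeries.coeff (n-1) (PowerSeries.derivativeFun f)) =
      PowerSeries.coeff n f * (n : Polynomial ℚ) := by
  cases n with
  | zero => simp
  | succ k => simp [coeff_derivativeFun'']

private lemma dfac_succ (n : ℕ) :
    (2*(n+1)-1).doubleFactorial = (2*n+1) * (2*n-1).doubleFactorial := by
  cases n with
  | zero => decide
  | succ k =>
    have h : 2*(k+1+1)-1 = (2*(k+1)-1)+2 := by omega
    rw [h, Nat.doubleFactorial_add_two]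
    congr 1

/-- As formal power series in `v` over `ℚ[q]`,
`(1+2qv)^{-1/2} · log(1+2qv)/(2q) = ∑_{m≥1} P(m,1) q^{m−1} v^m / m!`, where
`P(m,1) = (−1)^{m−1} (2m−1)!! ∑_{j=0}^{m−1} 1/(2j+1)`.
Here `g = (1+2qv)^{-1/2}` is characterized by `g²·(1+2qv) = 1` with constant term `1`,
and `L = log(1+2qv)/(2q) = ∑_{n≥1} (−1)^{n−1} 2^{n−1} q^{n−1} vⁿ / n`. -/
theorem sqrt_log_series_identity
    (g L : PowerSeries (Polynomial ℚ))
    (hg : g * g * (1 + PowerSeries.C (Polynomial.C 2 * Polynomial.X) *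
      PowerSeries.X) = 1)
    (hg0 : PowerSeries.constantCoeff g = 1)
    (hL : ∀ n : ℕ, PowerSeries.coeff n L =
      if n = 0 then 0 else
        Polynomial.C ((-1 : ℚ) ^ (n - 1) * 2 ^ (n - 1) / n) * Polynomial.X ^ (n - 1)) :
    g * L = PowerSeries.mk fun m =>
      Polynomial.C ((-1 : ℚ) ^ (m - 1) * ((2 * m - 1).doubleFactorial : ℚ) *
        (∑ j ∈ Finset.range m, (2 * (j : ℚ) + 1)⁻¹) / m.factorial) *
        Polynomial.X ^ (m - 1) := by
  set q2 : Polynomial ℚ := Polynomial.C 2 * Polynomial.X with hq2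
  set A : PowerSeries (Polynomial ℚ) :=
    1 + PowerSeries.C q2 * PowerSeries.X with hAdef
  set D := PowerSeries.derivativeFun (R := Polynomial ℚ) with hD
  have hDA : D A = PowerSeries.C q2 := by
    ext1 n
    simp only [hD, coeff_derivativeFun'', hAdef, map_add, PowerSeries.coeff_one,
      PowerSeries.coeff_C_mul, PowerSeries.coeff_X, PowerSeries.coeff_C]
    cases n <;> simp
  have hgne : g ≠ 0 := by
    intro h
    rw [h] at hg0
    simp at hg0
  -- the linear ODE for g
  have hODEg : 2 * (A * D g) = -(PowerSeries.C q2 * g) := by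
    have h0 : D (g * g * A) = 0 := by rw [hg]; simp [hD, PowerSeries.derivativeFun_one]
    rw [hD, PowerSeries.derivativeFun_mul, PowerSeries.derivativeFun_mul, ← hD, hDA] at h0
    simp only [smul_eq_mul] at h0
    have h1 : g * (2 * (A * D g) + PowerSeries.C q2 * g) = 0 := by
      calc g * (2 * (A * D g) + PowerSeries.C q2 * g)
          = g * g * PowerSeries.C q2 + A * (g * D g + g * D g) := by ring
        _ = 0 := h0
    rcases mul_eq_zero.mp h1 with h | h
    · exact absurd h hgne
    · exact eq_neg_of_add_eq_zero_left h
  -- coefficient recurrence for g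
  have hgrec : ∀ n : ℕ,
      2 * (PowerSeries.coeff (n+1) g * ((n : Polynomial ℚ)+1)
        + q2 * (PowerSeries.coeff n g * (n : Polynomial ℚ)))
      = -(q2 * PowerSeries.coeff n g) := by
    intro n
    have hODEg2 : A * D g + A * D g = -(PowerSeries.C q2 * g) := by
      rw [← two_mul]; exact hODEg
    have h := congrArg (PowerSeries.coeff n) hODEg2
    rw [map_add, map_neg, PowerSeries.coeff_C_mul, hAdef, coeff_A_mul, hD,
      coeff_derivativeFun'', pred_deriv] at h
    linear_combination h
  -- explicit coefficients of g
  have hgc : ∀ n : ℕ, PowerSeries.coeff n g =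
      Polynomial.C ((-1:ℚ)^n * ((2*n-1).doubleFactorial : ℚ) / n.factorial) *
        Polynomial.X ^ n := by
    intro n
    induction n with
    | zero =>
      rw [PowerSeries.coeff_zero_eq_constantCoeff, hg0]
      simp
    | succ n ih =>
      have h2 : (2*((n:Polynomial ℚ)+1)) ≠ 0 := by
        have h3 : ((2*(n+1) : ℕ) : Polynomial ℚ) ≠ 0 := Nat.cast_ne_zero.mpr (by omega)
        push_cast at h3
        simpa using h3
      apply mul_right_cancel₀ h2
      have hF1 : PowerSeries.coeff (n+1) g * (2*((n:Polynomial ℚ)+1)) =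
          -(q2 * PowerSeries.coeff n g)
            - 2*(q2 * (PowerSeries.coeff n g * (n:Polynomial ℚ))) := by
        linear_combination hgrec n
      rw [hF1, ih, hq2, show (Polynomial.C (2:ℚ)) = 2 from map_ofNat _ 2]
      have hs : ((-1:ℚ)^(n+1) * ((2*(n+1)-1).doubleFactorial : ℚ) / (n+1).factorial)
            * (2*((n:ℚ)+1))
          = ((-1:ℚ)^n * ((2*n-1).doubleFactorial : ℚ) / n.factorial) * (-2 - 4*n) := by
        rw [dfac_succ, Nat.factorial_succ]
        have h1 : (n.factorial : ℚ) ≠ 0 := Nat.cast_ne_zero.mpr n.factorial_ne_zero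
        have h4 : ((n:ℚ)+1) ≠ 0 := by positivity
        push_cast
        field_simp
        ring
      have hsC := congrArg Polynomial.C hs
      simp only [map_mul, map_add, map_neg, map_sub, map_one, map_ofNat,
        Polynomial.C_eq_natCast] at hsC
      linear_combination -(Polynomial.X : Polynomial ℚ)^(n+1) * hsC
  -- coefficients of D L
  have hDL : ∀ n : ℕ, PowerSeries.coeff n (D L) =
      Polynomial.C ((-2:ℚ)^n) * Polynomial.X ^ n := by
    intro n
    rw [hD, coeff_derivativeFun'', hL (n+1), if_neg (Nat.succ_ne_zero n)]
    simp only [Nat.add_sub_cancel]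
    have h4 : ((n:ℚ)+1) ≠ 0 := by positivity
    have hs : ((-1:ℚ)^n * 2^n / ((n:ℚ)+1)) * ((n:ℚ)+1) = (-2:ℚ)^n := by
      field_simp
      rw [show ((-2:ℚ)) = (-1)*2 by norm_num, mul_pow]
    have hsC := congrArg Polynomial.C hs
    simp only [map_mul, map_add, map_one, Polynomial.C_eq_natCast] at hsC
    push_cast
    linear_combination (Polynomial.X : Polynomial ℚ)^n * hsC
  -- A * D L = 1
  have hAL : A * D L = 1 := by
    ext1 n
    rw [hAdef, coeff_A_mul]
    cases n with
    | zero => simp [hDL 0]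
    | succ k =>
      rw [if_neg (Nat.succ_ne_zero k)]
      simp only [Nat.add_sub_cancel, hDL, PowerSeries.coeff_one, Nat.succ_ne_zero, if_false]
      rw [hq2]
      simp only [map_pow, map_neg, map_ofNat]
      ring
  -- the ODE for F = g * L
  have hODEF : 2 * (A * D (g * L)) =
      2 * g - PowerSeries.C q2 * (g * L) := by
    have hDF : D (g * L) = g * D L + L * D g := by
      rw [hD, PowerSeries.derivativeFun_mul, ← hD]
      simp only [smul_eq_mul]
    rw [hDF]
    linear_combination L * hODEg + 2 * g * hAL
  -- coefficient recurrence for F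
  have hFrec : ∀ n : ℕ,
      2 * (PowerSeries.coeff (n+1) (g * L) * ((n : Polynomial ℚ)+1)
        + q2 * (PowerSeries.coeff n (g * L) * (n : Polynomial ℚ)))
      = 2 * PowerSeries.coeff n g
        - q2 * PowerSeries.coeff n (g * L) := by
    intro n
    have hODEF2 : A * D (g * L) + A * D (g * L) =
        (g + g) - PowerSeries.C q2 * (g * L) := by
      linear_combination hODEF
    have h := congrArg (PowerSeries.coeff n) hODEF2
    rw [map_sub, map_add, map_add, PowerSeries.coeff_C_mul, hAdef, coeff_A_mul, hD,
      coeff_derivativeFun'', pred_deriv] at h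
    linear_combination h
  -- finish
  ext1 m
  rw [PowerSeries.coeff_mk]
  induction m with
  | zero =>
    rw [PowerSeries.coeff_zero_eq_constantCoeff, map_mul, hg0, one_mul,
      ← PowerSeries.coeff_zero_eq_constantCoeff, hL 0]
    simp
  | succ n ih =>
    have h2 : (2*((n:Polynomial ℚ)+1)) ≠ 0 := by
      have h3 : ((2*(n+1) : ℕ) : Polynomial ℚ) ≠ 0 := Nat.cast_ne_zero.mpr (by omega)
      push_cast at h3
      simpa using h3
    apply mul_right_cancel₀ h2
    have hF1 : PowerSeries.coeff (n+1) (g * L) * (2*((n:Polynomial ℚ)+1)) =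
        2 * PowerSeries.coeff n g
          - q2 * PowerSeries.coeff n (g * L)
          - 2*(q2 * (PowerSeries.coeff n (g * L) * (n:Polynomial ℚ))) := by
      linear_combination hFrec n
    rw [hF1, ih, hgc n, hq2, show (Polynomial.C (2:ℚ)) = 2 from map_ofNat _ 2]
    cases n with
    | zero =>
      norm_num [Finset.sum_range_succ]
    | succ k =>
      simp only [Nat.add_sub_cancel]
      have hfk : ((k+1).factorial : ℚ) ≠ 0 := Nat.cast_ne_zero.mpr (k+1).factorial_ne_zero
      have hk2 : ((k:ℚ)+2) ≠ 0 := by positivity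
      have hk3 : (2*(k:ℚ)+3) ≠ 0 := by positivity
      have hs : ((-1:ℚ)^(k+1) * ((2*(k+1+1)-1).doubleFactorial : ℚ)
            * (∑ j ∈ Finset.range (k+1+1), (2*(j:ℚ)+1)⁻¹) / (k+1+1).factorial)
            * (2*((k:ℚ)+1+1))
          = 2 * ((-1:ℚ)^(k+1) * ((2*(k+1)-1).doubleFactorial : ℚ) / (k+1).factorial)
            - ((-1:ℚ)^k * ((2*(k+1)-1).doubleFactorial : ℚ)
              * (∑ j ∈ Finset.range (k+1), (2*(j:ℚ)+1)⁻¹) / (k+1).factorial)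
              * (2 + 4*((k:ℚ)+1)) := by
        rw [dfac_succ (k+1), Finset.sum_range_succ, Nat.factorial_succ (k+1)]
        push_cast
        field_simp
        ring
      have hsC := congrArg Polynomial.C hs
      simp only [map_mul, map_add, map_sub, map_one, map_ofNat,
        Polynomial.C_eq_natCast] at hsC
      push_cast
      linear_combination -(Polynomial.X : Polynomial ℚ)^(k+1) * hsC
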